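/- There is no first-order formula φ(x, y) with two free variables over the language with a single binary relation symbol such that for every dimension n ≥ 1 and all partial instances e, e' of dimension n, the structure A_n ⊨ φ(e, e') if and only if |e_⊥| ≥ |e'_⊥|. -/
import Mathlib

open FirstOrder FirstOrder.Language

abbrev PI (n : ℕ) : Type := Fin n → Option Bool

def Subs {n : ℕ} (e e' : PI n) : Prop := ∀ i, e i ≠ none → e' i = e i

noncomputable def undefCard {n : ℕ} (e : PI n) : ℕ := Set.ncard {i | e i = none}

/-- The language with a single binary relation symbol. -/
def subLang : Language where
  Functions _ := Empty
  Relations n := match n with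
    | 2 => Unit
    | _ => Empty

/-- The structure `A_n`: partial instances of dimension `n` with subsumption `⊑`. -/
instance subStruct (n : ℕ) : subLang.Structure (PI n) where
  funMap := fun {_} f => f.elim
  RelMap := fun {k} r v => match k, r with
    | 2, _ => Subs (v 0) (v 1)

open scoped Classical

noncomputable def cnt {n : ℕ} {γ : Type} (f : γ → PI n) (τ : γ → Option Bool) : ℕ :=
  (Finset.univ.filter (fun j => (fun s => f s j) = τ)).card

def Eqv {n : ℕ} {γ : Type} (k : ℕ) (f g : γ → PI n) : Prop :=
  ∀ τ, cnt f τ = cnt g τ ∨ (3 ^ k ≤ cnt f τ ∧ 3 ^ k ≤ cnt g τ)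

lemma Eqv.symm {n : ℕ} {γ : Type} {k : ℕ} {f g : γ → PI n} (h : Eqv k f g) : Eqv k g f := by
  intro τ; rcases h τ with h | h
  · exact Or.inl h.symm
  · exact Or.inr ⟨h.2, h.1⟩

lemma Eqv.mono {n : ℕ} {γ : Type} {k k' : ℕ} (hk : k' ≤ k) {f g : γ → PI n}
    (h : Eqv k f g) : Eqv k' f g := by
  intro τ; rcases h τ with h | h
  · exact Or.inl h
  · exact Or.inr ⟨le_trans (Nat.pow_le_pow_right (by norm_num) hk) h.1,
      le_trans (Nat.pow_le_pow_right (by norm_num) hk) h.2⟩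

lemma cnt_pos_iff {n : ℕ} {γ : Type} {f g : γ → PI n} (h : Eqv 0 f g) (τ : γ → Option Bool) :
    0 < cnt f τ ↔ 0 < cnt g τ := by
  rcases h τ with h | h
  · rw [h]
  · simp only [pow_zero] at h; omega

lemma cnt_col_pos {n : ℕ} {γ : Type} (f : γ → PI n) (j : Fin n) :
    0 < cnt f (fun s => f s j) := by
  apply Finset.card_pos.2
  exact ⟨j, by simp [cnt]⟩

lemma exists_col {n : ℕ} {γ : Type} {f : γ → PI n} {τ : γ → Option Bool}
    (h : 0 < cnt f τ) : ∃ j, (fun s => f s j) = τ := by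
  obtain ⟨j, hj⟩ := Finset.card_pos.1 h
  exact ⟨j, (Finset.mem_filter.1 hj).2⟩

lemma atom_eq {n : ℕ} {γ : Type} {f g : γ → PI n} (h : Eqv 0 f g) (s t : γ) :
    f s = f t ↔ g s = g t := by
  have key : ∀ (f g : γ → PI n), Eqv 0 f g → f s = f t → g s = g t := by
    intro f g h hst
    funext j
    obtain ⟨j', hj'⟩ := exists_col ((cnt_pos_iff h _).2 (cnt_col_pos g j))
    have h1 : f s j' = g s j := by rw [← congrFun hj' s]
    have h2 : f t j' = g t j := by rw [← congrFun hj' t]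
    rw [← h1, ← h2, hst]
  exact ⟨key f g h, key g f h.symm⟩

lemma atom_subs {n : ℕ} {γ : Type} {f g : γ → PI n} (h : Eqv 0 f g) (s t : γ) :
    Subs (f s) (f t) ↔ Subs (g s) (g t) := by
  have key : ∀ (f g : γ → PI n), Eqv 0 f g → Subs (f s) (f t) → Subs (g s) (g t) := by
    intro f g h hst j hj
    obtain ⟨j', hj'⟩ := exists_col ((cnt_pos_iff h _).2 (cnt_col_pos g j))
    have h1 : f s j' = g s j := by rw [← congrFun hj' s]
    have h2 : f t j' = g t j := by rw [← congrFun hj' t]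
    rw [← h1, ← h2]
    exact hst j' (by rw [h1]; exact hj)
  exact ⟨key f g h, key g f h.symm⟩

/-- Composition with an equivalence preserves `Eqv`. -/
lemma Eqv.comp {n : ℕ} {γ δ : Type} {k : ℕ} {f g : γ → PI n} (h : Eqv k f g) (e : δ ≃ γ) :
    Eqv k (f ∘ e) (g ∘ e) := by
  have key : ∀ (f : γ → PI n) (σ : δ → Option Bool), cnt (f ∘ e) σ = cnt f (σ ∘ e.symm) := by
    intro f σ
    unfold cnt
    congr 1
    apply Finset.filter_congr
    intro j _
    constructor
    · intro hj; funext s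
      have := congrFun hj (e.symm s)
      simpa using this
    · intro hj; funext s
      have := congrFun hj (e s)
      simpa using this
  intro σ
  rw [key f σ, key g σ]
  exact h _

lemma pick3 (N a0 a1 a2 B : ℕ)
    (h : a0 + a1 + a2 = B ∨ (3 * N ≤ a0 + a1 + a2 ∧ 3 * N ≤ B)) :
    ∃ b0 b1 b2 : ℕ, b0 + b1 + b2 = B ∧
      (a0 = b0 ∨ (N ≤ a0 ∧ N ≤ b0)) ∧
      (a1 = b1 ∨ (N ≤ a1 ∧ N ≤ b1)) ∧
      (a2 = b2 ∨ (N ≤ a2 ∧ N ≤ b2)) := by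
  rcases h with h | ⟨h1, h2⟩
  · exact ⟨a0, a1, a2, h, Or.inl rfl, Or.inl rfl, Or.inl rfl⟩
  · rcases le_total a0 a1 with h01 | h01 <;> rcases le_total a1 a2 with h12 | h12 <;>
      rcases le_total a0 a2 with h02 | h02
    · exact ⟨min a0 N, min a1 N, B - min a0 N - min a1 N, by omega, by omega, by omega, by omega⟩
    · exact ⟨min a0 N, min a1 N, B - min a0 N - min a1 N, by omega, by omega, by omega, by omega⟩
    · exact ⟨min a0 N, B - min a0 N - min a2 N, min a2 N, by omega, by omega, by omega, by omega⟩
    · exact ⟨min a0 N, B - min a0 N - min a2 N, min a2 N, by omega, by omega, by omega, by omega⟩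
    · exact ⟨min a0 N, min a1 N, B - min a0 N - min a1 N, by omega, by omega, by omega, by omega⟩
    · exact ⟨B - min a1 N - min a2 N, min a1 N, min a2 N, by omega, by omega, by omega, by omega⟩
    · exact ⟨B - min a1 N - min a2 N, min a1 N, min a2 N, by omega, by omega, by omega, by omega⟩
    · exact ⟨B - min a1 N - min a2 N, min a1 N, min a2 N, by omega, by omega, by omega, by omega⟩

lemma exists_fun_fibers {n : ℕ} (B : Finset (Fin n)) (b0 b1 b2 : ℕ)
    (hsum : b0 + b1 + b2 = B.card) :
    ∃ d : Fin n → Option Bool,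
      (B.filter (fun j => d j = none)).card = b0 ∧
      (B.filter (fun j => d j = some false)).card = b1 ∧
      (B.filter (fun j => d j = some true)).card = b2 := by
  obtain ⟨B0, hB0sub, hB0⟩ := Finset.exists_subset_card_eq (show b0 ≤ B.card by omega)
  obtain ⟨B1, hB1sub, hB1⟩ := Finset.exists_subset_card_eq
    (show b1 ≤ (B \ B0).card by rw [Finset.card_sdiff_of_subset hB0sub]; omega)
  refine ⟨fun j => if j ∈ B0 then none else if j ∈ B1 then some false else some true, ?_, ?_, ?_⟩
  · rw [← hB0]; congr 1; ext j
    simp only [Finset.mem_filter]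
    constructor
    · rintro ⟨hjB, hj⟩
      by_contra hj0
      simp [hj0] at hj
      split at hj <;> simp_all
    · intro hj
      refine ⟨hB0sub hj, by simp [hj]⟩
  · rw [← hB1]; congr 1; ext j
    have hB1' : B1 ⊆ B \ B0 := hB1sub
    simp only [Finset.mem_filter]
    constructor
    · rintro ⟨hjB, hj⟩
      by_cases hj0 : j ∈ B0
      · simp [hj0] at hj
      · by_cases hj1 : j ∈ B1
        · exact hj1
        · simp [hj0, hj1] at hj
    · intro hj
      have := hB1' hj
      rw [Finset.mem_sdiff] at this
      exact ⟨this.1, by simp [this.2, hj]⟩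
  · have key : B.filter (fun j => (if j ∈ B0 then none else if j ∈ B1 then some false else some true : Option Bool) = some true) = (B \ B0) \ B1 := by
      ext j
      have hB1' : B1 ⊆ B \ B0 := hB1sub
      simp only [Finset.mem_filter, Finset.mem_sdiff]
      constructor
      · rintro ⟨hjB, hj⟩
        by_cases hj0 : j ∈ B0
        · simp [hj0] at hj
        · by_cases hj1 : j ∈ B1
          · simp [hj0, hj1] at hj
          · exact ⟨⟨hjB, hj0⟩, hj1⟩
      · rintro ⟨⟨hjB, hj0⟩, hj1⟩
        exact ⟨hjB, by simp [hj0, hj1]⟩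
    rw [key, Finset.card_sdiff_of_subset hB1sub, Finset.card_sdiff_of_subset hB0sub]
    omega

lemma card_filter_option {n : ℕ} (S : Finset (Fin n)) (c : Fin n → Option Bool) :
    (S.filter (fun j => c j = none)).card + (S.filter (fun j => c j = some false)).card
      + (S.filter (fun j => c j = some true)).card = S.card := by
  classical
  have h1 : S.filter (fun j => c j = none) ∪ S.filter (fun j => c j = some false)
      ∪ S.filter (fun j => c j = some true) = S := by
    ext j
    simp only [Finset.mem_union, Finset.mem_filter]
    constructor
    · rintro ((⟨h, _⟩ | ⟨h, _⟩) | ⟨h, _⟩) <;> exact h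
    · intro hj
      rcases hc : c j with _ | b
      · exact Or.inl (Or.inl ⟨hj, rfl⟩)
      · rcases b
        · exact Or.inl (Or.inr ⟨hj, rfl⟩)
        · exact Or.inr ⟨hj, rfl⟩
  have d1 : Disjoint (S.filter (fun j => c j = none)) (S.filter (fun j => c j = some false)) := by
    rw [Finset.disjoint_left]
    intro j h1 h2
    rw [Finset.mem_filter] at h1 h2
    rw [h1.2] at h2
    simp at h2
  have d2 : Disjoint (S.filter (fun j => c j = none) ∪ S.filter (fun j => c j = some false))
      (S.filter (fun j => c j = some true)) := by
    rw [Finset.disjoint_left]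
    intro j h1 h2
    rw [Finset.mem_union] at h1
    rw [Finset.mem_filter] at h2
    rcases h1 with h1 | h1 <;> rw [Finset.mem_filter] at h1 <;> rw [h1.2] at h2 <;> simp at h2
  calc (S.filter (fun j => c j = none)).card + (S.filter (fun j => c j = some false)).card
      + (S.filter (fun j => c j = some true)).card
      = (S.filter (fun j => c j = none) ∪ S.filter (fun j => c j = some false)).card
        + (S.filter (fun j => c j = some true)).card := by
        rw [Finset.card_union_of_disjoint d1]
    _ = (S.filter (fun j => c j = none) ∪ S.filter (fun j => c j = some false)
        ∪ S.filter (fun j => c j = some true)).card := by rw [Finset.card_union_of_disjoint d2]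
    _ = S.card := by rw [h1]

def optExt {n : ℕ} {γ : Type} (f : γ → PI n) (c : PI n) : Option γ → PI n :=
  fun o => Option.elim o c f

lemma col_optExt {n : ℕ} {γ : Type} (f : γ → PI n) (c : PI n) (j : Fin n)
    (σ : Option γ → Option Bool) :
    (fun s => optExt f c s j) = σ ↔ ((fun s => f s j) = σ ∘ some ∧ c j = σ none) := by
  constructor
  · rintro rfl
    exact ⟨rfl, rfl⟩
  · rintro ⟨h1, h2⟩
    funext o
    rcases o with _ | s
    · exact h2
    · exact congrFun h1 s

lemma cnt_optExt {n : ℕ} {γ : Type} (f : γ → PI n) (c : PI n) (σ : Option γ → Option Bool) :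
    cnt (optExt f c) σ =
      ((Finset.univ.filter (fun j => (fun s => f s j) = σ ∘ some)).filter
        (fun j => c j = σ none)).card := by
  unfold cnt
  rw [Finset.filter_filter]
  congr 1
  apply Finset.filter_congr
  intro j _
  simpa using col_optExt f c j σ

lemma ext_lemma {n : ℕ} {γ : Type} {k : ℕ} {f g : γ → PI n} (h : Eqv (k + 1) f g) (c : PI n) :
    ∃ d : PI n, Eqv k (optExt f c) (optExt g d) := by
  set A : (γ → Option Bool) → Finset (Fin n) :=
    fun τ => Finset.univ.filter (fun j => (fun s => f s j) = τ) with hA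
  set B : (γ → Option Bool) → Finset (Fin n) :=
    fun τ => Finset.univ.filter (fun j => (fun s => g s j) = τ) with hB
  have step1 : ∀ τ : γ → Option Bool, ∃ dτ : Fin n → Option Bool,
      ∀ w : Option Bool,
        ((A τ).filter (fun j => c j = w)).card = ((B τ).filter (fun j => dτ j = w)).card ∨
        (3 ^ k ≤ ((A τ).filter (fun j => c j = w)).card ∧
          3 ^ k ≤ ((B τ).filter (fun j => dτ j = w)).card) := by
    intro τ
    have hsum := card_filter_option (A τ) c
    have hτ := h τ
    have hAB : (A τ).card = (B τ).card ∨ (3 * 3 ^ k ≤ (A τ).card ∧ 3 * 3 ^ k ≤ (B τ).card) := by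
      have : (3 : ℕ) ^ (k + 1) = 3 * 3 ^ k := by ring
      rw [this] at hτ
      exact hτ
    obtain ⟨b0, b1, b2, hb, h0, h1, h2⟩ := pick3 (3 ^ k)
      ((A τ).filter (fun j => c j = none)).card
      ((A τ).filter (fun j => c j = some false)).card
      ((A τ).filter (fun j => c j = some true)).card
      (B τ).card (by omega)
    obtain ⟨dτ, hd0, hd1, hd2⟩ := exists_fun_fibers (B τ) b0 b1 b2 hb
    refine ⟨dτ, ?_⟩
    intro w
    rcases w with _ | b
    · rw [hd0]; exact h0
    · rcases b
      · rw [hd1]; exact h1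
      · rw [hd2]; exact h2
  choose dfun hdfun using step1
  refine ⟨fun j => dfun (fun s => g s j) j, ?_⟩
  intro σ
  rw [cnt_optExt, cnt_optExt]
  have hfix : ((B (σ ∘ some)).filter (fun j => dfun (fun s => g s j) j = σ none)).card =
      ((B (σ ∘ some)).filter (fun j => dfun (σ ∘ some) j = σ none)).card := by
    congr 1
    apply Finset.filter_congr
    intro j hj
    rw [hB] at hj
    simp only [Finset.mem_filter] at hj
    rw [hj.2]
  rw [show (Finset.univ.filter (fun j => (fun s => f s j) = σ ∘ some)) = A (σ ∘ some) from rfl,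
    show (Finset.univ.filter (fun j => (fun s => g s j) = σ ∘ some)) = B (σ ∘ some) from rfl,
    hfix]
  exact hdfun (σ ∘ some) (σ none)

def snocEquiv (α : Type) (ℓ : ℕ) : (α ⊕ Fin (ℓ + 1)) ≃ Option (α ⊕ Fin ℓ) where
  toFun x := Sum.elim (fun a => some (Sum.inl a))
    (fun i => Fin.lastCases none (fun j => some (Sum.inr j)) i) x
  invFun o := o.elim (Sum.inr (Fin.last ℓ)) (Sum.elim Sum.inl (fun j => Sum.inr j.castSucc))
  left_inv := by
    rintro (a | i)
    · rfl
    · refine Fin.lastCases ?_ ?_ i <;> simp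
  right_inv := by rintro (_ | (a | j)) <;> simp

lemma optExt_comp_snocEquiv {n : ℕ} {α : Type} {ℓ : ℕ} (v : α → PI n) (xs : Fin ℓ → PI n)
    (c : PI n) :
    (optExt (Sum.elim v xs) c) ∘ (snocEquiv α ℓ) = Sum.elim v (Fin.snoc xs c) := by
  funext x
  rcases x with a | i
  · rfl
  · refine Fin.lastCases ?_ ?_ i
    · simp [snocEquiv, optExt]
    · intro j
      simp [snocEquiv, optExt]

def fdepth : ∀ {α : Type} {ℓ : ℕ}, subLang.BoundedFormula α ℓ → ℕ
  | _, _, .falsum => 0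
  | _, _, .equal _ _ => 0
  | _, _, .rel _ _ => 0
  | _, _, .imp φ ψ => max (fdepth φ) (fdepth ψ)
  | _, _, .all φ => fdepth φ + 1

lemma term_eq_var {γ : Type} (t : subLang.Term γ) : ∃ s, t = Term.var s := by
  rcases t with s | ⟨f, ts⟩
  · exact ⟨s, rfl⟩
  · exact Empty.elim f

lemma transfer {α : Type} {n : ℕ} {ℓ : ℕ} (φ : subLang.BoundedFormula α ℓ) :
    ∀ (k : ℕ), fdepth φ ≤ k → ∀ (v v' : α → PI n) (xs xs' : Fin ℓ → PI n),
      Eqv k (Sum.elim v xs) (Sum.elim v' xs') → (φ.Realize v xs ↔ φ.Realize v' xs') := by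
  induction φ with
  | falsum => intro k hk v v' xs xs' h; rfl
  | equal t1 t2 =>
    intro k hk v v' xs xs' h
    obtain ⟨s, rfl⟩ := term_eq_var t1
    obtain ⟨t, rfl⟩ := term_eq_var t2
    show Sum.elim v xs s = Sum.elim v xs t ↔ Sum.elim v' xs' s = Sum.elim v' xs' t
    exact atom_eq (h.mono (Nat.zero_le k)) s t
  | @rel m l R ts =>
    intro k hk v v' xs xs' h
    match l, R with
    | 0, R => exact Empty.elim R
    | 1, R => exact Empty.elim R
    | (j+3), R => exact Empty.elim R
    | 2, R =>
      obtain ⟨s, hs⟩ := term_eq_var (ts 0)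
      obtain ⟨t, ht⟩ := term_eq_var (ts 1)
      show Subs (Term.realize (Sum.elim v xs) (ts 0)) (Term.realize (Sum.elim v xs) (ts 1)) ↔
        Subs (Term.realize (Sum.elim v' xs') (ts 0)) (Term.realize (Sum.elim v' xs') (ts 1))
      rw [hs, ht]
      exact atom_subs (h.mono (Nat.zero_le k)) s t
  | imp φ ψ ihφ ihψ =>
    intro k hk v v' xs xs' h
    simp only [fdepth] at hk
    simp only [BoundedFormula.realize_imp]
    rw [ihφ k (le_trans (le_max_left _ _) hk) v v' xs xs' h,
      ihψ k (le_trans (le_max_right _ _) hk) v v' xs xs' h]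
  | all φ ih =>
    intro k hk v v' xs xs' h
    simp only [fdepth] at hk
    simp only [BoundedFormula.realize_all]
    have hk1 : 1 ≤ k := by omega
    have hkeq : k - 1 + 1 = k := by omega
    have hdep : fdepth φ ≤ k - 1 := by omega
    constructor
    · intro H c'
      obtain ⟨d, hd⟩ := ext_lemma (k := k - 1) (by rw [hkeq]; exact h.symm) c'
      have hd2 : Eqv (k - 1) (Sum.elim v (Fin.snoc xs d)) (Sum.elim v' (Fin.snoc xs' c')) := by
        rw [← optExt_comp_snocEquiv v xs d, ← optExt_comp_snocEquiv v' xs' c']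
        exact (hd.symm).comp (snocEquiv α _)
      exact (ih (k - 1) hdep v v' _ _ hd2).1 (H d)
    · intro H c
      obtain ⟨d, hd⟩ := ext_lemma (k := k - 1) (by rw [hkeq]; exact h) c
      have hd2 : Eqv (k - 1) (Sum.elim v (Fin.snoc xs c)) (Sum.elim v' (Fin.snoc xs' d)) := by
        rw [← optExt_comp_snocEquiv v xs c, ← optExt_comp_snocEquiv v' xs' d]
        exact hd.comp (snocEquiv α _)
      exact (ih (k - 1) hdep v v' _ _ hd2).2 (H d)

lemma card_filter_lt {n m : ℕ} (hmn : m ≤ n) :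
    (Finset.univ.filter (fun j : Fin n => (j : ℕ) < m)).card = m := by
  apply Finset.card_eq_of_bijective (fun i h => ⟨i, lt_of_lt_of_le h hmn⟩)
  · intro a ha
    simp only [Finset.mem_filter] at ha
    exact ⟨a, ha.2, rfl⟩
  · intro i h
    simp [h]
  · intro i j hi hj hij
    simpa using congrArg Fin.val hij

lemma card_filter_ge {n m : ℕ} (hmn : m ≤ n) :
    (Finset.univ.filter (fun j : Fin n => m ≤ (j : ℕ))).card = n - m := by
  have h := Finset.card_filter_add_card_filter_not
    (s := (Finset.univ : Finset (Fin n))) (p := fun j : Fin n => (j : ℕ) < m)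
  simp only [not_lt] at h
  rw [card_filter_lt hmn] at h
  simp only [Finset.card_univ, Fintype.card_fin] at h
  omega

theorem stmt1 :
    ¬ ∃ φ : subLang.Formula (Fin 2),
      ∀ (n : ℕ), 1 ≤ n → ∀ (e e' : PI n),
        (φ.Realize ![e, e'] ↔ undefCard e' ≤ undefCard e) := by
  rintro ⟨φ, hφ⟩
  set k := fdepth φ with hk
  set m := 3 ^ k with hm
  set n := 2 * m + 1 with hn
  have hmpos : 1 ≤ m := Nat.one_le_pow _ _ (by norm_num)
  have hnpos : 1 ≤ n := by omega
  set e : PI n := fun i => if (i : ℕ) < m then none else some false with he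
  set e' : PI n := fun i => if (i : ℕ) < m then some false else none with he'
  -- undefCard computations
  have hude : undefCard e = m := by
    have h2 : {i : Fin n | e i = none} =
        ↑(Finset.univ.filter (fun j : Fin n => (j : ℕ) < m)) := by
      ext i
      simp only [Set.mem_setOf_eq, Finset.coe_filter, Finset.mem_univ, true_and, he]
      split <;> simp_all
    rw [undefCard, h2, Set.ncard_coe_finset, card_filter_lt (by omega)]
  have hude' : undefCard e' = m + 1 := by
    have h2 : {i : Fin n | e' i = none} =
        ↑(Finset.univ.filter (fun j : Fin n => m ≤ (j : ℕ))) := by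
      ext i
      simp only [Set.mem_setOf_eq, Finset.coe_filter, Finset.mem_univ, true_and, he']
      split <;> simp_all <;> omega
    rw [undefCard, h2, Set.ncard_coe_finset, card_filter_ge (by omega)]
    omega
  have hE1 : ∀ j : Fin n, e j = none ↔ (j : ℕ) < m := by
    intro j; simp only [he]; split_ifs with hj <;> simp [hj]
  have hE1' : ∀ j : Fin n, e' j = none ↔ m ≤ (j : ℕ) := by
    intro j; simp only [he']; split_ifs with hj <;> simp [hj] <;> omega
  have hE2 : ∀ (j : Fin n) (b : Bool), e j = some b ↔ (m ≤ (j : ℕ) ∧ b = false) := by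
    intro j b; simp only [he]; split_ifs with hj <;> simp [hj, eq_comm] <;> omega
  have hE2' : ∀ (j : Fin n) (b : Bool), e' j = some b ↔ ((j : ℕ) < m ∧ b = false) := by
    intro j b; simp only [he']; split_ifs with hj <;> simp [hj, eq_comm] <;> omega
  -- the key Eqv
  have hEqv : ∀ xs xs' : Fin 0 → PI n, Eqv (n := n) (γ := Fin 2 ⊕ Fin 0) k
      (Sum.elim ![e, e'] xs) (Sum.elim ![e', e] xs') := by
    intro xs xs' τ
    have hcol : ∀ (ys : Fin 0 → PI n) (a b : PI n) (j : Fin n),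
        ((fun s => Sum.elim ![a, b] ys s j) = τ) ↔
          (a j = τ (Sum.inl 0) ∧ b j = τ (Sum.inl 1)) := by
      intro ys a b j
      constructor
      · rintro rfl; exact ⟨rfl, rfl⟩
      · rintro ⟨h1, h2⟩
        funext s
        rcases s with i | i
        · match i with
          | 0 => exact h1
          | 1 => exact h2
        · exact i.elim0
    have key : ∀ (ys : Fin 0 → PI n) (a b : PI n), cnt (Sum.elim ![a, b] ys) τ =
        (Finset.univ.filter (fun j : Fin n => a j = τ (Sum.inl 0) ∧ b j = τ (Sum.inl 1))).card := by
      intro ys a b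
      unfold cnt
      congr 1
      ext j
      simp only [Finset.mem_filter, Finset.mem_univ, true_and]
      exact hcol ys a b j
    rw [key, key]
    rcases h0 : τ (Sum.inl 0) with _ | b0 <;> rcases h1 : τ (Sum.inl 1) with _ | b1
    · -- (none, none)
      left
      have hz1 : (Finset.univ.filter (fun j : Fin n => e j = (none : Option Bool) ∧ e' j = none)) = ∅ := by
        ext j
        simp only [Finset.mem_filter, Finset.mem_univ, true_and, Finset.notMem_empty,
          iff_false, hE1, hE1']
        omega
      have hz2 : (Finset.univ.filter (fun j : Fin n => e' j = (none : Option Bool) ∧ e j = none)) = ∅ := by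
        ext j
        simp only [Finset.mem_filter, Finset.mem_univ, true_and, Finset.notMem_empty,
          iff_false, hE1, hE1']
        omega
      rw [hz1, hz2]
    · -- (none, some b1)
      rcases b1 with _ | _
      · right
        have hc1 : (Finset.univ.filter (fun j : Fin n => e j = (none : Option Bool) ∧ e' j = some false))
            = Finset.univ.filter (fun j : Fin n => (j : ℕ) < m) := by
          ext j
          simp only [Finset.mem_filter, Finset.mem_univ, true_and, hE1, hE2',
            eq_self_iff_true, and_true]
          omega
        have hc2 : (Finset.univ.filter (fun j : Fin n => e' j = (none : Option Bool) ∧ e j = some false))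
            = Finset.univ.filter (fun j : Fin n => m ≤ (j : ℕ)) := by
          ext j
          simp only [Finset.mem_filter, Finset.mem_univ, true_and, hE1', hE2,
            eq_self_iff_true, and_true]
          omega
        rw [hc1, hc2, card_filter_lt (by omega), card_filter_ge (by omega)]
        omega
      · left
        have hz1 : (Finset.univ.filter (fun j : Fin n => e j = (none : Option Bool) ∧ e' j = some true)) = ∅ := by
          ext j
          simp only [Finset.mem_filter, Finset.mem_univ, true_and, Finset.notMem_empty,
            iff_false, hE1, hE2', Bool.true_eq_false, and_false, not_and, not_false_iff,
            false_and, and_true]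
          try omega
        have hz2 : (Finset.univ.filter (fun j : Fin n => e' j = (none : Option Bool) ∧ e j = some true)) = ∅ := by
          ext j
          simp only [Finset.mem_filter, Finset.mem_univ, true_and, Finset.notMem_empty,
            iff_false, hE1', hE2, Bool.true_eq_false, and_false, not_and, not_false_iff,
            false_and, and_true]
          try omega
        rw [hz1, hz2]
    · -- (some b0, none)
      rcases b0 with _ | _
      · right
        have hc1 : (Finset.univ.filter (fun j : Fin n => e j = some false ∧ e' j = (none : Option Bool)))
            = Finset.univ.filter (fun j : Fin n => m ≤ (j : ℕ)) := by
          ext j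
          simp only [Finset.mem_filter, Finset.mem_univ, true_and, hE1', hE2,
            eq_self_iff_true, and_true]
          omega
        have hc2 : (Finset.univ.filter (fun j : Fin n => e' j = some false ∧ e j = (none : Option Bool)))
            = Finset.univ.filter (fun j : Fin n => (j : ℕ) < m) := by
          ext j
          simp only [Finset.mem_filter, Finset.mem_univ, true_and, hE1, hE2',
            eq_self_iff_true, and_true]
          omega
        rw [hc1, hc2, card_filter_lt (by omega), card_filter_ge (by omega)]
        omega
      · left
        have hz1 : (Finset.univ.filter (fun j : Fin n => e j = some true ∧ e' j = (none : Option Bool))) = ∅ := by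
          ext j
          simp only [Finset.mem_filter, Finset.mem_univ, true_and, Finset.notMem_empty,
            iff_false, hE1', hE2, Bool.true_eq_false, and_false, not_and, not_false_iff,
            false_and, and_true]
          try omega
        have hz2 : (Finset.univ.filter (fun j : Fin n => e' j = some true ∧ e j = (none : Option Bool))) = ∅ := by
          ext j
          simp only [Finset.mem_filter, Finset.mem_univ, true_and, Finset.notMem_empty,
            iff_false, hE1, hE2', Bool.true_eq_false, and_false, not_and, not_false_iff,
            false_and, and_true]
          try omega
        rw [hz1, hz2]
    · -- (some b0, some b1) : never both defined
      left
      have hz1 : (Finset.univ.filter (fun j : Fin n => e j = some b0 ∧ e' j = some b1)) = ∅ := by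
        ext j
        simp only [Finset.mem_filter, Finset.mem_univ, true_and, Finset.notMem_empty,
          iff_false, hE2, hE2', not_and]
        intro h _
        omega
      have hz2 : (Finset.univ.filter (fun j : Fin n => e' j = some b0 ∧ e j = some b1)) = ∅ := by
        ext j
        simp only [Finset.mem_filter, Finset.mem_univ, true_and, Finset.notMem_empty,
          iff_false, hE2, hE2', not_and]
        intro h _
        omega
      rw [hz1, hz2]
  -- conclude
  have h1 := hφ n hnpos e e'
  have h2 := hφ n hnpos e' e
  rw [Formula.Realize] at h1 h2
  have hfin := h1.1 ((transfer φ k le_rfl ![e, e'] ![e', e] _ _ (hEqv _ _)).2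
    (h2.2 (by rw [hude, hude']; omega)))
  rw [hude, hude'] at hfin
  omega
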